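/- Let A, B be positive semidefinite matrices with A + B invertible, and let U be a unitary with √A·√B·U = √(√A·B·√A). If λ₁ ≠ λ₂ are two eigenvalues of the pencil (√B, U√A), then the corresponding eigenspaces Null(√B − λ₁·U√A) and Null(√B − λ₂·U√A) intersect trivially (where the eigenspace for λ = ∞ is Null(√A)). -/

import Mathlib

open scoped ComplexOrder
open scoped Matrix

open scoped MatrixOrder Matrix.Norms.L2Operator in
open Classical in
/-- The unique positive semidefinite square root of a positive semidefinite matrix
(junk value 0 otherwise). -/
noncomputable def psqrt {n : Type*} [Fintype n] [DecidableEq n] (X : Matrix n n ℂ) :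
    Matrix n n ℂ :=
  if h : X.PosSemidef then CFC.sqrt X else 0

/-- The range (support) of a matrix, i.e. the orthogonal complement of its kernel. -/
noncomputable def msupp {n : Type*} [Fintype n] [DecidableEq n] (X : Matrix n n ℂ) :
    Submodule ℂ (EuclideanSpace ℂ n) :=
  (LinearMap.ker (Matrix.toEuclideanLin X))ᗮ

/-- The kernel of a matrix, as a subspace of Euclidean space. -/
noncomputable def mker {n : Type*} [Fintype n] [DecidableEq n] (X : Matrix n n ℂ) :
    Submodule ℂ (EuclideanSpace ℂ n) :=
  LinearMap.ker (Matrix.toEuclideanLin X)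

/-- The generalized geometric mean M(A,B) = √A · √(√(A⁺) B √(A⁺)) · √A, where Ap
stands for the Moore–Penrose pseudoinverse A⁺ of A. -/
noncomputable def geoMean {n : Type*} [Fintype n] [DecidableEq n]
    (A Ap B : Matrix n n ℂ) : Matrix n n ℂ :=
  psqrt A * psqrt (psqrt Ap * B * psqrt Ap) * psqrt A


lemma mem_mker_iff {n : Type*} [Fintype n] [DecidableEq n] (X : Matrix n n ℂ)
    (x : EuclideanSpace ℂ n) :
    x ∈ mker X ↔ X *ᵥ (WithLp.equiv 2 (n → ℂ) x) = 0 := by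
  rw [mker, LinearMap.mem_ker, Matrix.toEuclideanLin_apply]
  exact WithLp.toLp_eq_zero ..

open scoped MatrixOrder Matrix.Norms.L2Operator in
lemma key_zero {n : Type*} [Fintype n] [DecidableEq n]
    {A B : Matrix n n ℂ} (hA : A.PosSemidef) (hB : B.PosSemidef)
    (hAB : IsUnit (A + B)) {v : n → ℂ}
    (h1 : psqrt A *ᵥ v = 0) (h2 : psqrt B *ᵥ v = 0) : v = 0 := by
  have hA' : psqrt A = CFC.sqrt A := dif_pos hA
  have hB' : psqrt B = CFC.sqrt B := dif_pos hB
  have hAv : A *ᵥ v = 0 := by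
    rw [← CFC.sqrt_mul_sqrt_self A hA.nonneg, ← Matrix.mulVec_mulVec, ← hA', h1, Matrix.mulVec_zero]
  have hBv : B *ᵥ v = 0 := by
    rw [← CFC.sqrt_mul_sqrt_self B hB.nonneg, ← Matrix.mulVec_mulVec, ← hB', h2, Matrix.mulVec_zero]
  have : (A + B) *ᵥ v = (A + B) *ᵥ 0 := by
    rw [Matrix.add_mulVec, hAv, hBv, Matrix.mulVec_zero, add_zero]
  exact Matrix.mulVec_injective_iff_isUnit.2 hAB this

lemma cancel_U {n : Type*} [Fintype n] [DecidableEq n]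
    {U X : Matrix n n ℂ} (hU : U ∈ Matrix.unitaryGroup n ℂ) {v : n → ℂ}
    (h : (U * X) *ᵥ v = 0) : X *ᵥ v = 0 := by
  have : X = star U * (U * X) := by rw [← mul_assoc, hU.1, one_mul]
  rw [this, ← Matrix.mulVec_mulVec, h, Matrix.mulVec_zero]

/-- Distinct eigenspaces of the pencil (√B, U√A) intersect trivially, where the
eigenspace for λ ∈ ℂ is Null(√B − λ·U√A) and the eigenspace for λ = ∞ (⊤) is Null(√A). -/
theorem pencil_eigenspaces_trivial_inter
    {n : Type*} [Fintype n] [DecidableEq n]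
    (A B U : Matrix n n ℂ) (hA : A.PosSemidef) (hB : B.PosSemidef)
    (hAB : IsUnit (A + B))
    (hU : U ∈ Matrix.unitaryGroup n ℂ)
    (hpolar : psqrt A * psqrt B * U = psqrt (psqrt A * B * psqrt A))
    (E : WithTop ℂ → Submodule ℂ (EuclideanSpace ℂ n))
    (hE : ∀ lam : ℂ, E (lam : WithTop ℂ) = mker (psqrt B - lam • (U * psqrt A)))
    (hEtop : E ⊤ = mker (psqrt A))
    (lam₁ lam₂ : WithTop ℂ) (hne : lam₁ ≠ lam₂) :
    E lam₁ ⊓ E lam₂ = ⊥ := by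
  -- reduce to showing each element of the intersection is zero
  rw [eq_bot_iff]
  rintro x ⟨h1, h2⟩
  simp only [SetLike.mem_coe, Submodule.mem_bot]
  set v := WithLp.equiv 2 (n → ℂ) x with hv
  -- it suffices to kill both √A v and √B v
  suffices hs : psqrt A *ᵥ v = 0 ∧ psqrt B *ᵥ v = 0 by
    have hv0 : v = 0 := key_zero hA hB hAB hs.1 hs.2
    have : x = (WithLp.equiv 2 (n → ℂ)).symm v := ((WithLp.equiv 2 (n → ℂ)).symm_apply_apply x).symm
    rw [this, hv0]
    exact WithLp.toLp_zero ..
  -- a helper for the mixed (finite, ∞) case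
  have mixed : ∀ (mu : ℂ), x ∈ mker (psqrt A) → x ∈ mker (psqrt B - mu • (U * psqrt A)) →
      psqrt A *ᵥ v = 0 ∧ psqrt B *ᵥ v = 0 := by
    intro mu ha hb
    have ha' : psqrt A *ᵥ v = 0 := (mem_mker_iff _ x).1 ha
    have hb' : (psqrt B - mu • (U * psqrt A)) *ᵥ v = 0 := (mem_mker_iff _ x).1 hb
    rw [Matrix.sub_mulVec, Matrix.smul_mulVec, ← Matrix.mulVec_mulVec, ha',
      Matrix.mulVec_zero, smul_zero, sub_zero] at hb'
    exact ⟨ha', hb'⟩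
  cases lam₁ with
  | top =>
    cases lam₂ with
    | top => exact absurd rfl hne
    | coe mu => exact mixed mu (hEtop ▸ h1) (hE mu ▸ h2)
  | coe mu₁ =>
    cases lam₂ with
    | top => exact (mixed mu₁ (hEtop ▸ h2) (hE mu₁ ▸ h1))
    | coe mu₂ =>
      have hmu : mu₁ ≠ mu₂ := fun h => hne (by rw [h])
      have h1' : (psqrt B - mu₁ • (U * psqrt A)) *ᵥ v = 0 := (mem_mker_iff _ x).1 (hE mu₁ ▸ h1)
      have h2' : (psqrt B - mu₂ • (U * psqrt A)) *ᵥ v = 0 := (mem_mker_iff _ x).1 (hE mu₂ ▸ h2)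
      rw [Matrix.sub_mulVec, Matrix.smul_mulVec, sub_eq_zero] at h1' h2'
      have hw : (mu₁ - mu₂) • ((U * psqrt A) *ᵥ v) = 0 := by
        rw [sub_smul, ← h1', ← h2', sub_self]
      have hw0 : (U * psqrt A) *ᵥ v = 0 :=
        (smul_eq_zero.1 hw).resolve_left (sub_ne_zero.2 hmu)
      refine ⟨cancel_U hU hw0, ?_⟩
      rw [h1', hw0, smul_zero]
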